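/- Every semigroup which is a disjoint union of finitely many copies of the free monogenic semigroup is finitely presented. -/

import Mathlib

/-- `spow a n` is the `n`-th power of `a` in a semigroup, for `n ≥ 1`
(with the junk value `a` at `n = 0`). -/
def spow {S : Type*} [Semigroup S] (a : S) : ℕ → S
  | 0 => a
  | 1 => a
  | (n + 2) => spow a (n + 1) * a

/-- The subsemigroup (as a set) generated by `a`: all positive powers of `a`. -/
def Nblock {S : Type*} [Semigroup S] (a : S) : Set S :=
  {x | ∃ i : ℕ, 1 ≤ i ∧ x = spow a i}

/-- A semigroup is finitely presented if it is isomorphic to the quotient of a free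
semigroup on a finite alphabet by the congruence generated by a finite set of pairs. -/
def FinitelyPresentedSemigroup (S : Type*) [Semigroup S] : Prop :=
  ∃ (X : Type) (_ : Finite X) (R : Set (FreeSemigroup X × FreeSemigroup X)),
    R.Finite ∧ Nonempty ((conGen fun u v => (u, v) ∈ R).Quotient ≃* S)

namespace Stmt10
variable {S T : Type*} [Semigroup S] [Semigroup T]

theorem spow_one (a : S) : spow a 1 = a := rfl

theorem spow_succ (a : S) {n : ℕ} (h : 1 ≤ n) : spow a (n + 1) = spow a n * a := by
  obtain ⟨k, rfl⟩ := Nat.exists_eq_add_of_le h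
  rw [Nat.add_comm 1 k]
  rfl

theorem spow_succ' (a : S) {n : ℕ} (h : 1 ≤ n) : spow a (n + 1) = a * spow a n := by
  induction n with
  | zero => omega
  | succ k ih =>
    rcases Nat.eq_zero_or_pos k with hk | hk
    · subst hk; rfl
    · calc spow a (k + 1 + 1) = spow a (k + 1) * a := spow_succ a (by omega)
        _ = (a * spow a k) * a := by rw [ih hk]
        _ = a * (spow a k * a) := mul_assoc _ _ _
        _ = a * spow a (k + 1) := by rw [← spow_succ a hk]

theorem spow_add (a : S) {m n : ℕ} (hm : 1 ≤ m) (hn : 1 ≤ n) :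
    spow a (m + n) = spow a m * spow a n := by
  induction n with
  | zero => omega
  | succ k ih =>
    rcases Nat.eq_zero_or_pos k with hk | hk
    · subst hk; exact spow_succ a hm
    · rw [← Nat.add_assoc, spow_succ a (by omega), ih hk, spow_succ a hk, mul_assoc]

theorem map_spow (f : S →ₙ* T) (a : S) (n : ℕ) : f (spow a n) = spow (f a) n := by
  induction n with
  | zero => rfl
  | succ k ih =>
    rcases Nat.eq_zero_or_pos k with hk | hk
    · subst hk; rfl
    · rw [spow_succ a hk, map_mul, ih, spow_succ (f a) hk]

section Main

variable {N : ℕ} (g : Fin N → S)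
  (hc : ∀ x : S, ∃ p : Fin N × ℕ, 1 ≤ p.2 ∧ x = spow (g p.1) p.2)
  (hf : ∀ (a b : Fin N) (i j : ℕ), 1 ≤ i → 1 ≤ j →
      spow (g a) i = spow (g b) j → a = b ∧ i = j)

/-- the canonical hom from the free semigroup -/
noncomputable def pi : FreeSemigroup (Fin N) →ₙ* S := FreeSemigroup.lift g

noncomputable def ba (x : S) : Fin N := (hc x).choose.1
noncomputable def ex (x : S) : ℕ := (hc x).choose.2

theorem ex_pos (x : S) : 1 ≤ ex g hc x := (hc x).choose_spec.1
theorem spow_ba_ex (x : S) : x = spow (g (ba g hc x)) (ex g hc x) := (hc x).choose_spec.2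

include hf in
theorem coord_unique {x : S} {v : Fin N} {i : ℕ} (hi : 1 ≤ i) (hx : x = spow (g v) i) :
    ba g hc x = v ∧ ex g hc x = i :=
  hf _ _ _ _ (ex_pos g hc x) hi ((spow_ba_ex g hc x).symm.trans hx)

/-- the word `a b^n` -/
noncomputable def wrd (a b : Fin N) (n : ℕ) : FreeSemigroup (Fin N) :=
  FreeSemigroup.of a * spow (FreeSemigroup.of b) n

/-- the value `g a * (g b)^n` -/
noncomputable def sv (a b : Fin N) (n : ℕ) : S := g a * spow (g b) n

theorem pi_spow (u : FreeSemigroup (Fin N)) (n : ℕ) :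
    pi g (spow u n) = spow (pi g u) n := map_spow _ _ _

theorem pi_of (x : Fin N) : pi g (FreeSemigroup.of x) = g x := FreeSemigroup.lift_of _ _

theorem pi_wrd (a b : Fin N) (n : ℕ) : pi g (wrd a b n) = sv g a b n := by
  rw [wrd, sv, map_mul, pi_spow, pi_of, pi_of]

theorem sv_split (a b : Fin N) {m k : ℕ} (hm : 1 ≤ m) (hk : 1 ≤ k) :
    sv g a b (m + k) = sv g a b m * spow (g b) k := by
  rw [sv, sv, spow_add _ hm hk, mul_assoc]

theorem wrd_split (a b : Fin N) {m k : ℕ} (hm : 1 ≤ m) (hk : 1 ≤ k) :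
    wrd a b (m + k) = wrd a b m * spow (FreeSemigroup.of b) k := by
  rw [wrd, wrd, spow_add _ hm hk, mul_assoc]


include hf in
theorem key (a b : Fin N) :
    ∃ R : Set (FreeSemigroup (Fin N) × FreeSemigroup (Fin N)), R.Finite ∧
      (∀ p ∈ R, pi g p.1 = pi g p.2) ∧
      ∀ n, 1 ≤ n → (conGen fun u v => (u, v) ∈ R) (wrd a b n)
        (spow (FreeSemigroup.of (ba g hc (sv g a b n))) (ex g hc (sv g a b n))) := by
  classical
  set cn : ℕ → Fin N := fun n => ba g hc (sv g a b n) with hcn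
  set en : ℕ → ℕ := fun n => ex g hc (sv g a b n) with hen
  have hsv : ∀ n, sv g a b n = spow (g (cn n)) (en n) := fun n => spow_ba_ex g hc _
  have hen1 : ∀ n, 1 ≤ en n := fun n => ex_pos g hc _
  have htruth1 : ∀ k, pi g (wrd a b k) = pi g (spow (FreeSemigroup.of (cn k)) (en k)) := by
    intro k; rw [pi_wrd, pi_spow, pi_of, ← hsv]
  by_cases hcase : ∃ m n, 1 ≤ m ∧ m < n ∧ sv g a b m = sv g a b n
  · -- eventually periodic case
    obtain ⟨m, n', hm1, hmn, hper⟩ := hcase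
    set q := n' - m with hq
    have hq1 : 1 ≤ q := by omega
    have PER : ∀ k, m ≤ k → sv g a b (k + q) = sv g a b k := by
      intro k hk
      rcases eq_or_lt_of_le hk with heq | h
      · rw [← heq, show m + q = n' from by omega]; exact hper.symm
      · have h1 : k + q = n' + (k - m) := by omega
        have h2 : m + (k - m) = k := by omega
        rw [h1, sv_split g a b (by omega) (by omega), ← hper,
          ← sv_split g a b (by omega) (by omega), h2]
    set RS := ((fun k => (wrd a b k, spow (FreeSemigroup.of (cn k)) (en k))) '' Set.Icc 1 n')
        ∪ {(wrd a b n', wrd a b m)} with hRS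
    refine ⟨RS, ?_, ?_, ?_⟩
    · exact ((Set.finite_Icc 1 n').image _).union (Set.finite_singleton _)
    · rintro p (⟨k, hk, rfl⟩ | hp)
      · exact htruth1 k
      · rw [Set.mem_singleton_iff] at hp; subst hp
        rw [pi_wrd, pi_wrd, hper]
    · intro n
      induction n using Nat.strong_induction_on with
      | _ n IH =>
      intro hn
      by_cases hle : n ≤ n'
      · exact ConGen.Rel.of _ _ (Or.inl ⟨n, ⟨hn, hle⟩, rfl⟩)
      · push_neg at hle
        have e1 : wrd a b n = wrd a b n' * spow (FreeSemigroup.of b) (n - n') := by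
          have h := wrd_split a b (show 1 ≤ n' by omega) (show 1 ≤ n - n' by omega)
          rw [show n' + (n - n') = n from by omega] at h; exact h
        have e2 : wrd a b m * spow (FreeSemigroup.of b) (n - n') = wrd a b (n - q) := by
          have h := wrd_split a b hm1 (show 1 ≤ n - n' by omega)
          rw [show m + (n - n') = n - q from by omega] at h; exact h.symm
        have step1 : (conGen fun u v => (u, v) ∈ RS) (wrd a b n) (wrd a b (n - q)) := by
          rw [e1, ← e2]
          exact ConGen.Rel.mul (ConGen.Rel.of _ _ (Or.inr rfl)) (ConGen.Rel.refl _)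
        have ih' := IH (n - q) (by omega) (by omega)
        have hco : sv g a b n = sv g a b (n - q) := by
          have h := PER (n - q) (by omega)
          rw [show n - q + q = n from by omega] at h; exact h
        have hc1 : cn n = cn (n - q) := by
          show ba g hc (sv g a b n) = ba g hc (sv g a b (n - q)); rw [hco]
        have hc2 : en n = en (n - q) := by
          show ex g hc (sv g a b n) = ex g hc (sv g a b (n - q)); rw [hco]
        show (conGen fun u v => (u, v) ∈ RS) (wrd a b n) (spow (FreeSemigroup.of (cn n)) (en n))
        rw [hc1, hc2]
        exact ConGen.Rel.trans step1 ih'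
  · -- injective case
    push_neg at hcase
    have sInj : ∀ {k l}, 1 ≤ k → 1 ≤ l → sv g a b k = sv g a b l → k = l := by
      intro k l hk hl he
      rcases lt_trichotomy k l with h | h | h
      · exact absurd he (hcase k l hk h)
      · exact h
      · exact absurd he.symm (hcase l k hl h)
    set Binf : Set (Fin N) := {v | {k | 1 ≤ k ∧ cn k = v}.Infinite} with hBinf
    have hwit : ∀ v : Fin N, ∃ m0 n0 : ℕ, v ∈ Binf →
        1 ≤ m0 ∧ m0 < n0 ∧ cn m0 = v ∧ cn n0 = v ∧ en m0 ≤ en n0 := by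
      intro v
      by_cases hv : v ∈ Binf
      · have hv' : {k | 1 ≤ k ∧ cn k = v}.Infinite := hv
        obtain ⟨m0, hm0⟩ := hv'.nonempty
        have hJ : ({k | 1 ≤ k ∧ cn k = v} \ Set.Iic m0).Infinite := hv'.diff (Set.finite_Iic m0)
        have hinjJ : Set.InjOn en ({k | 1 ≤ k ∧ cn k = v} \ Set.Iic m0) := by
          intro k1 hk1 k2 hk2 he
          apply sInj hk1.1.1 hk2.1.1
          rw [hsv k1, hsv k2, hk1.1.2, hk2.1.2, he]
        have himg : (en '' ({k | 1 ≤ k ∧ cn k = v} \ Set.Iic m0)).Infinite := by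
          intro hfin
          exact hJ (Set.Finite.of_finite_image hfin hinjJ)
        obtain ⟨y, hy, hy2⟩ := not_bddAbove_iff.mp himg.not_bddAbove (en m0)
        obtain ⟨n0, hn0, rfl⟩ := hy
        refine ⟨m0, n0, fun _ => ⟨hm0.1, ?_, hm0.2, hn0.1.2, le_of_lt hy2⟩⟩
        have := hn0.2
        simp only [Set.mem_Iic] at this
        omega
      · exact ⟨0, 0, fun h => absurd h hv⟩
    choose mv nv hmv using hwit
    set qv : Fin N → ℕ := fun v => nv v - mv v with hqv
    set dv : Fin N → ℕ := fun v => en (nv v) - en (mv v) with hdv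
    have ruleB : ∀ v, v ∈ Binf → ∀ f, en (mv v) ≤ f →
        spow (g v) f * spow (g b) (qv v) = spow (g v) (f + dv v) := by
      intro v hv f hle
      obtain ⟨h1, h2, h3, h4, h5⟩ := hmv v hv
      have hqv1 : 1 ≤ qv v := by simp only [hqv]; omega
      have hbase : spow (g v) (en (mv v)) * spow (g b) (qv v) = spow (g v) (en (mv v) + dv v) := by
        have e1 : sv g a b (mv v + qv v) = sv g a b (mv v) * spow (g b) (qv v) :=
          sv_split g a b h1 hqv1
        rw [show mv v + qv v = nv v from by simp only [hqv]; omega] at e1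
        calc spow (g v) (en (mv v)) * spow (g b) (qv v)
            = sv g a b (mv v) * spow (g b) (qv v) := by rw [hsv (mv v), h3]
          _ = sv g a b (nv v) := e1.symm
          _ = spow (g v) (en (nv v)) := by rw [hsv (nv v), h4]
          _ = spow (g v) (en (mv v) + dv v) := by
              congr 1; simp only [hdv]; omega
      rcases eq_or_lt_of_le hle with rfl | hlt
      · exact hbase
      · have hj : 1 ≤ f - en (mv v) := by omega
        calc spow (g v) f * spow (g b) (qv v)
            = (spow (g v) (f - en (mv v)) * spow (g v) (en (mv v))) * spow (g b) (qv v) := by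
              rw [← spow_add _ hj (hen1 (mv v)), show f - en (mv v) + en (mv v) = f from by omega]
          _ = spow (g v) (f - en (mv v)) * (spow (g v) (en (mv v)) * spow (g b) (qv v)) :=
              mul_assoc _ _ _
          _ = spow (g v) (f - en (mv v)) * spow (g v) (en (mv v) + dv v) := by rw [hbase]
          _ = spow (g v) (f + dv v) := by
              rw [← spow_add _ hj (by have := hen1 (mv v); omega),
                show f - en (mv v) + (en (mv v) + dv v) = f + dv v from by omega]
    have ruleT : ∀ v, v ∈ Binf → ∀ t, 1 ≤ t → ∀ f, en (mv v) ≤ f →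
        spow (g v) f * spow (g b) (qv v * t) = spow (g v) (f + dv v * t) := by
      intro v hv t
      induction t with
      | zero => intro h; omega
      | succ k ih =>
        intro _ f hf2
        rcases Nat.eq_zero_or_pos k with hk | hk
        · subst hk
          rw [Nat.mul_one, Nat.mul_one]
          exact ruleB v hv f hf2
        · have hqv1 : 1 ≤ qv v := by
            obtain ⟨h1, h2, _⟩ := hmv v hv; simp only [hqv]; omega
          calc spow (g v) f * spow (g b) (qv v * (k + 1))
              = spow (g v) f * (spow (g b) (qv v * k) * spow (g b) (qv v)) := by
                rw [← spow_add _ (Nat.mul_pos hqv1 hk) hqv1,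
                  show qv v * k + qv v = qv v * (k + 1) from by ring]
            _ = (spow (g v) f * spow (g b) (qv v * k)) * spow (g b) (qv v) :=
                (mul_assoc _ _ _).symm
            _ = spow (g v) (f + dv v * k) * spow (g b) (qv v) := by rw [ih hk f hf2]
            _ = spow (g v) (f + dv v * k + dv v) := ruleB v hv _ (by omega)
            _ = spow (g v) (f + dv v * (k + 1)) := by
                rw [show f + dv v * k + dv v = f + dv v * (k + 1) from by ring]
    set Q : ℕ := ∏ v : Fin N, (if v ∈ Binf then qv v else 1) with hQdef
    have hQ1 : 1 ≤ Q := by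
      refine Finset.one_le_prod' (fun v _ => ?_)
      split_ifs with h
      · obtain ⟨h1, h2, _⟩ := hmv v h; simp only [hqv]; omega
      · exact le_refl 1
    have hdvd : ∀ v ∈ Binf, qv v ∣ Q := by
      intro v hv
      have h : (if v ∈ Binf then qv v else 1) ∣ Q :=
        Finset.dvd_prod_of_mem (fun v => if v ∈ Binf then qv v else 1) (Finset.mem_univ v)
      rwa [if_pos hv] at h
    set Dv : Fin N → ℕ := fun v => dv v * (Q / qv v) with hDvdef
    have ruleQ : ∀ v ∈ Binf, ∀ f, en (mv v) ≤ f →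
        spow (g v) f * spow (g b) Q = spow (g v) (f + Dv v) := by
      intro v hv f hf2
      have ht : qv v * (Q / qv v) = Q := Nat.mul_div_cancel' (hdvd v hv)
      have ht1 : 1 ≤ Q / qv v := by
        rcases Nat.eq_zero_or_pos (Q / qv v) with h | h
        · rw [h, Nat.mul_zero] at ht; omega
        · exact h
      have h := ruleT v hv (Q / qv v) ht1 f hf2
      rwa [ht] at h
    set F : ℕ := 1 + Finset.univ.sup (fun v => if v ∈ Binf then en (mv v) else 0) with hFdef
    have hFv : ∀ v ∈ Binf, en (mv v) ≤ F := by
      intro v hv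
      have h : (if v ∈ Binf then en (mv v) else 0) ≤
          Finset.univ.sup (fun v => if v ∈ Binf then en (mv v) else 0) :=
        Finset.le_sup (f := fun v => if v ∈ Binf then en (mv v) else 0) (Finset.mem_univ v)
      rw [if_pos hv] at h; omega
    have hF1 : 1 ≤ F := by omega
    have hbadfin : {k | 1 ≤ k ∧ (cn k ∉ Binf ∨ en k < F)}.Finite := by
      have h1 : {k | 1 ≤ k ∧ cn k ∉ Binf}.Finite := by
        have hsub : {k | 1 ≤ k ∧ cn k ∉ Binf} ⊆
            ⋃ v ∈ {v : Fin N | v ∉ Binf}, {k | 1 ≤ k ∧ cn k = v} := by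
          intro k hk; exact Set.mem_biUnion hk.2 ⟨hk.1, rfl⟩
        refine Set.Finite.subset (Set.Finite.biUnion (Set.toFinite _) ?_) hsub
        intro v hv
        exact Set.not_infinite.mp hv
      have h2 : {k | 1 ≤ k ∧ en k < F}.Finite := by
        have hsub : {k | 1 ≤ k ∧ en k < F} ⊆
            ⋃ v : Fin N, ⋃ f ∈ Set.Iio F, {k | 1 ≤ k ∧ cn k = v ∧ en k = f} := by
          intro k hk
          exact Set.mem_iUnion.mpr ⟨cn k, Set.mem_biUnion hk.2 ⟨hk.1, rfl, rfl⟩⟩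
        refine Set.Finite.subset
          (Set.finite_iUnion fun v => Set.Finite.biUnion (Set.finite_Iio F) fun f _ => ?_) hsub
        apply Set.Subsingleton.finite
        intro k1 hk1 k2 hk2
        apply sInj hk1.1 hk2.1
        rw [hsv k1, hsv k2, hk1.2.1, hk2.2.1, hk1.2.2, hk2.2.2]
      refine Set.Finite.subset (h1.union h2) ?_
      rintro k ⟨hk1, hk2 | hk2⟩
      · exact Or.inl ⟨hk1, hk2⟩
      · exact Or.inr ⟨hk1, hk2⟩
    obtain ⟨P0, hP0⟩ := hbadfin.bddAbove
    set P := P0 + 1 with hPdef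
    have GOOD : ∀ k, P ≤ k → cn k ∈ Binf ∧ F ≤ en k := by
      intro k hk
      by_contra hcon
      have hk1 : 1 ≤ k := by omega
      have hmem : k ∈ {k | 1 ≤ k ∧ (cn k ∉ Binf ∨ en k < F)} := by
        refine ⟨hk1, ?_⟩
        by_contra h2
        push_neg at h2
        exact hcon ⟨h2.1, h2.2⟩
      have := hP0 hmem
      omega
    have SEM : ∀ k, P ≤ k → cn (k + Q) = cn k ∧ en (k + Q) = en k + Dv (cn k) := by
      intro k hk
      obtain ⟨hB, hFe⟩ := GOOD k hk
      have h1 : sv g a b (k + Q) = spow (g (cn k)) (en k + Dv (cn k)) := by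
        rw [sv_split g a b (by omega) hQ1, hsv k,
          ruleQ (cn k) hB (en k) (le_trans (hFv _ hB) hFe)]
      exact coord_unique g hc hf (by have := hen1 k; omega) h1
    set RS := ((fun k => (wrd a b k, spow (FreeSemigroup.of (cn k)) (en k))) '' Set.Icc 1 (P + Q))
        ∪ ((fun v => (spow (FreeSemigroup.of v) F * spow (FreeSemigroup.of b) Q,
            spow (FreeSemigroup.of v) (F + Dv v))) '' Binf) with hRS
    refine ⟨RS, ?_, ?_, ?_⟩
    · exact ((Set.finite_Icc _ _).image _).union ((Set.toFinite Binf).image _)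
    · rintro p (⟨k, hk, rfl⟩ | ⟨v, hv, rfl⟩)
      · exact htruth1 k
      · show pi g (spow (FreeSemigroup.of v) F * spow (FreeSemigroup.of b) Q)
          = pi g (spow (FreeSemigroup.of v) (F + Dv v))
        rw [map_mul, pi_spow, pi_spow, pi_spow, pi_of, pi_of]
        exact ruleQ v hv F (hFv v hv)
    · intro n
      induction n using Nat.strong_induction_on with
      | _ n IH =>
      intro hn
      by_cases hle : n ≤ P + Q
      · exact ConGen.Rel.of _ _ (Or.inl ⟨n, ⟨hn, hle⟩, rfl⟩)
      · push_neg at hle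
        have e1 : wrd a b n = wrd a b (n - Q) * spow (FreeSemigroup.of b) Q := by
          have h := wrd_split a b (show 1 ≤ n - Q by omega) hQ1
          rw [show n - Q + Q = n from by omega] at h; exact h
        have ih' := IH (n - Q) (by omega) (by omega)
        obtain ⟨hB, hFe⟩ := GOOD (n - Q) (by omega)
        have hS2 : (conGen fun u v => (u, v) ∈ RS)
            (spow (FreeSemigroup.of (cn (n - Q))) (en (n - Q)) * spow (FreeSemigroup.of b) Q)
            (spow (FreeSemigroup.of (cn (n - Q))) (en (n - Q) + Dv (cn (n - Q)))) := by
          rcases eq_or_lt_of_le hFe with hEq | hlt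
          · rw [← hEq]
            exact ConGen.Rel.of _ _ (Or.inr ⟨cn (n - Q), hB, rfl⟩)
          · have hj : 1 ≤ en (n - Q) - F := by omega
            have e3 : spow (FreeSemigroup.of (cn (n - Q))) (en (n - Q)) * spow (FreeSemigroup.of b) Q
                = spow (FreeSemigroup.of (cn (n - Q))) (en (n - Q) - F) *
                  (spow (FreeSemigroup.of (cn (n - Q))) F * spow (FreeSemigroup.of b) Q) := by
              rw [← mul_assoc, ← spow_add _ hj hF1,
                show en (n - Q) - F + F = en (n - Q) from by omega]
            have e4 : spow (FreeSemigroup.of (cn (n - Q))) (en (n - Q) - F) *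
                  spow (FreeSemigroup.of (cn (n - Q))) (F + Dv (cn (n - Q)))
                = spow (FreeSemigroup.of (cn (n - Q))) (en (n - Q) + Dv (cn (n - Q))) := by
              rw [← spow_add _ hj (by omega),
                show en (n - Q) - F + (F + Dv (cn (n - Q))) = en (n - Q) + Dv (cn (n - Q)) from by omega]
            rw [e3, ← e4]
            exact ConGen.Rel.mul (ConGen.Rel.refl _)
              (ConGen.Rel.of _ _ (Or.inr ⟨cn (n - Q), hB, rfl⟩))
        have step1 : (conGen fun u v => (u, v) ∈ RS) (wrd a b n)
            (spow (FreeSemigroup.of (cn (n - Q))) (en (n - Q)) * spow (FreeSemigroup.of b) Q) := by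
          rw [e1]
          exact ConGen.Rel.mul ih' (ConGen.Rel.refl _)
        obtain ⟨hceq, heeq⟩ := SEM (n - Q) (by omega)
        rw [show n - Q + Q = n from by omega] at hceq heeq
        show (conGen fun u v => (u, v) ∈ RS) (wrd a b n) (spow (FreeSemigroup.of (cn n)) (en n))
        rw [hceq, heeq]
        exact ConGen.Rel.trans step1 hS2


include hf in
theorem derive_all :
    ∃ R : Set (FreeSemigroup (Fin N) × FreeSemigroup (Fin N)), R.Finite ∧
      (∀ p ∈ R, pi g p.1 = pi g p.2) ∧
      ∀ u : FreeSemigroup (Fin N), (conGen fun x y => (x, y) ∈ R) u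
        (spow (FreeSemigroup.of (ba g hc (pi g u))) (ex g hc (pi g u))) := by
  classical
  choose Rab hfin htrue hder using key g hc hf
  refine ⟨⋃ a, ⋃ b, Rab a b, ?_, ?_, ?_⟩
  · exact Set.finite_iUnion fun a => Set.finite_iUnion fun b => hfin a b
  · rintro p hp
    simp only [Set.mem_iUnion] at hp
    obtain ⟨a, b, hp⟩ := hp
    exact htrue a b p hp
  · have hmono : ∀ a b : Fin N, ∀ x y, (conGen fun x y => (x, y) ∈ Rab a b) x y →
        (conGen fun x y => (x, y) ∈ ⋃ a, ⋃ b, Rab a b) x y := by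
      intro a b x y hxy
      refine Con.le_def.mp (Con.conGen_le.mpr ?_) hxy
      intro x y hxy2
      refine ConGen.Rel.of _ _ ?_
      simp only [Set.mem_iUnion]
      exact ⟨a, b, hxy2⟩
    intro u
    induction u using FreeSemigroup.recOnMul with
    | ih1 x =>
      have h1 : pi g (FreeSemigroup.of x) = spow (g x) 1 := pi_of g x
      obtain ⟨hba, hex⟩ := coord_unique g hc hf (le_refl 1) h1
      rw [hba, hex]
      exact ConGen.Rel.refl _
    | ih2 x y _ ihy =>
      have hj1 : 1 ≤ ex g hc (pi g y) := ex_pos g hc _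
      have step1 : (conGen fun x y => (x, y) ∈ ⋃ a, ⋃ b, Rab a b) (FreeSemigroup.of x * y)
          (FreeSemigroup.of x * spow (FreeSemigroup.of (ba g hc (pi g y))) (ex g hc (pi g y))) :=
        ConGen.Rel.mul (ConGen.Rel.refl _) ihy
      have step2 := hmono x (ba g hc (pi g y)) _ _
        (hder x (ba g hc (pi g y)) (ex g hc (pi g y)) hj1)
      have heq : pi g (FreeSemigroup.of x * y) = sv g x (ba g hc (pi g y)) (ex g hc (pi g y)) := by
        rw [map_mul, pi_of, sv]
        congr 1
        exact spow_ba_ex g hc (pi g y)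
      rw [heq]
      exact ConGen.Rel.trans step1 step2

include hc hf in
theorem main : FinitelyPresentedSemigroup S := by
  classical
  obtain ⟨R, hfin, htrue, hder⟩ := derive_all g hc hf
  have hker : ∀ u v, (conGen fun x y => (x, y) ∈ R) u v ↔ pi g u = pi g v := by
    intro u v
    constructor
    · intro h
      let K : Con (FreeSemigroup (Fin N)) :=
        ⟨⟨fun u v => pi g u = pi g v, ⟨fun _ => rfl, Eq.symm, Eq.trans⟩⟩,
          fun {w x y z} h1 h2 => by
            have h1' : pi g w = pi g x := h1
            have h2' : pi g y = pi g z := h2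
            show pi g (w * y) = pi g (x * z)
            rw [map_mul, map_mul, h1', h2']⟩
      exact Con.le_def.mp ((Con.conGen_le (c := K)).mpr (fun x y hxy => htrue (x, y) hxy)) h
    · intro h
      have h1 := hder u
      rw [h] at h1
      exact ConGen.Rel.trans h1 (ConGen.Rel.symm (hder v))
  refine ⟨Fin N, inferInstance, R, hfin, ⟨?_⟩⟩
  let c : Con (FreeSemigroup (Fin N)) := conGen fun x y => (x, y) ∈ R
  have hresp : ∀ u v, c u v → pi g u = pi g v := fun u v => (hker u v).mp
  let f : c.Quotient → S := fun q => Quotient.liftOn' q (pi g) hresp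
  have hf_mk : ∀ u : FreeSemigroup (Fin N), f (u : c.Quotient) = pi g u := fun u => rfl
  have hfmul : ∀ q1 q2, f (q1 * q2) = f q1 * f q2 := by
    intro q1 q2
    refine Con.induction_on₂ q1 q2 (fun u v => ?_)
    rw [← Con.coe_mul, hf_mk, hf_mk, hf_mk, map_mul]
  refine MulEquiv.ofBijective (⟨f, fun q1 q2 => hfmul q1 q2⟩ : c.Quotient →ₙ* S) ⟨?_, ?_⟩
  · intro q1 q2
    refine Con.induction_on₂ q1 q2 (fun u v huv => ?_)
    have : pi g u = pi g v := huv
    exact (Con.eq c).mpr ((hker u v).mpr this)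
  · intro x
    refine ⟨((spow (FreeSemigroup.of (ba g hc x)) (ex g hc x) : FreeSemigroup (Fin N)) : c.Quotient), ?_⟩
    show pi g (spow (FreeSemigroup.of (ba g hc x)) (ex g hc x)) = x
    rw [pi_spow, pi_of]
    exact (spow_ba_ex g hc x).symm

end Main
end Stmt10

theorem stmt10 {S : Type*} [Semigroup S] {A : Type*} [Finite A] (gen : A → S)
    (hcover : ∀ x : S, ∃ a : A, x ∈ Nblock (gen a))
    (hfree : ∀ (a b : A) (i j : ℕ), 1 ≤ i → 1 ≤ j →
      spow (gen a) i = spow (gen b) j → a = b ∧ i = j) :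
    FinitelyPresentedSemigroup S := by
  classical
  let e := Finite.equivFin A
  let g : Fin (Nat.card A) → S := fun v => gen (e.symm v)
  have hc : ∀ x : S, ∃ p : Fin (Nat.card A) × ℕ, 1 ≤ p.2 ∧ x = spow (g p.1) p.2 := by
    intro x
    obtain ⟨a, i, hi, hx⟩ := hcover x
    refine ⟨(e a, i), hi, ?_⟩
    have : g (e a) = gen a := by simp [g]
    rw [this]
    exact hx
  have hf : ∀ (a b : Fin (Nat.card A)) (i j : ℕ), 1 ≤ i → 1 ≤ j →
      spow (g a) i = spow (g b) j → a = b ∧ i = j := by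
    intro a b i j hi hj hs
    obtain ⟨h1, h2⟩ := hfree (e.symm a) (e.symm b) i j hi hj hs
    exact ⟨e.symm.injective h1, h2⟩
  exact Stmt10.main g hc hf
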